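/- For every integer n ≥ 2, any finite totally ordered effect algebra with n elements is isomorphic to the scale effect algebra S_n = {0, 1/(n-1), 2/(n-1), …, 1} ⊂ [0,1], where x ⊕ y is defined iff x + y ≤ 1 and equals x + y. In particular, up to isomorphism there is exactly one totally ordered effect algebra of each finite cardinality n ≥ 2. -/

import Mathlib

/-- An effect algebra: a set with `zero`, `one`, a partial commutative associative
sum (modelled as an `Option`-valued operation), unique complements, and
`e ⊕ 1` defined only for `e = 0`. -/
structure EffectAlgebra (E : Type*) where
  zero : E
  one : E
  add : E → E → Option E
  comm : ∀ e f, add e f = add f e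
  assoc : ∀ e f g, (add e f).bind (fun s => add s g) = (add f g).bind (fun s => add e s)
  compl : E → E
  add_compl : ∀ e, add e (compl e) = some one
  compl_unique : ∀ e f, add e f = some one → f = compl e
  one_max : ∀ e f, add e one = some f → e = zero

namespace EffectAlgebra

variable {E : Type*}

/-- Intrinsic order: `e ≤ f` iff `f = e ⊕ g` for some `g`. -/
def le (A : EffectAlgebra E) (e f : E) : Prop := ∃ g, A.add e g = some f

/-- Iterated sum `e ⊕ e ⊕ ⋯ ⊕ e` (`n` copies), when defined. -/
def nsum (A : EffectAlgebra E) (e : E) : ℕ → Option E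
  | 0 => some A.zero
  | n + 1 => (nsum A e n).bind (fun s => A.add e s)

end EffectAlgebra

/-- The underlying set `{k/(n-1) : 0 ≤ k ≤ n-1}` of the scale effect algebra `S_n`. -/
def scaleSet (n : ℕ) : Set ℝ := {x | ∃ k : ℕ, k ≤ n - 1 ∧ x = (k : ℝ) / ((n : ℝ) - 1)}


namespace EffectAlgebra

variable {E : Type*}

lemma compl_compl (A : EffectAlgebra E) (e : E) : A.compl (A.compl e) = e := by
  have h : A.add (A.compl e) e = some A.one := by rw [A.comm]; exact A.add_compl e
  exact (A.compl_unique _ _ h).symm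

lemma compl_one (A : EffectAlgebra E) : A.compl A.one = A.zero := by
  apply A.one_max _ A.one
  rw [A.comm]; exact A.add_compl A.one

lemma compl_zero (A : EffectAlgebra E) : A.compl A.zero = A.one := by
  rw [← A.compl_one, A.compl_compl]

lemma one_add_zero (A : EffectAlgebra E) : A.add A.one A.zero = some A.one := by
  have h := A.add_compl A.one
  rwa [A.compl_one] at h

lemma add_zero_aux (A : EffectAlgebra E) (e : E) :
    A.add (A.compl e) A.zero = some (A.compl e) := by
  have h := A.assoc e (A.compl e) A.zero
  rw [A.add_compl, Option.bind_some, A.one_add_zero] at h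
  cases h2 : A.add (A.compl e) A.zero with
  | none => rw [h2] at h; simp at h
  | some s =>
    rw [h2, Option.bind_some] at h
    have hs : s = A.compl e := A.compl_unique e s h.symm
    rw [hs]

lemma add_zero (A : EffectAlgebra E) (e : E) : A.add e A.zero = some e := by
  have h := A.add_zero_aux (A.compl e)
  rwa [A.compl_compl] at h

lemma zero_add (A : EffectAlgebra E) (e : E) : A.add A.zero e = some e := by
  rw [A.comm]; exact A.add_zero e

lemma sub_compl (A : EffectAlgebra E) {c e w : E} (h : A.add c e = some w) :
    A.add (A.compl w) c = some (A.compl e) := by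
  have h1 := A.assoc c e (A.compl w)
  rw [h, Option.bind_some, A.add_compl w] at h1
  obtain ⟨d, hd, hcd⟩ := Option.bind_eq_some_iff.mp h1.symm
  have hd2 : d = A.compl c := A.compl_unique c d hcd
  have h2 := A.assoc e (A.compl w) c
  rw [hd, hd2, Option.bind_some] at h2
  rw [show A.add (A.compl c) c = some A.one from by rw [A.comm]; exact A.add_compl c] at h2
  obtain ⟨u, hu, heu⟩ := Option.bind_eq_some_iff.mp h2.symm
  have hue : u = A.compl e := A.compl_unique e u heu
  rw [hu, hue]

lemma cancel (A : EffectAlgebra E) {c e f w : E} (h1 : A.add c e = some w)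
    (h2 : A.add c f = some w) : e = f := by
  have a1 := A.sub_compl h1
  have a2 := A.sub_compl h2
  rw [a1] at a2
  have h := Option.some.inj a2
  calc e = A.compl (A.compl e) := (A.compl_compl e).symm
    _ = A.compl (A.compl f) := by rw [h]
    _ = f := A.compl_compl f

lemma eq_zero_right (A : EffectAlgebra E) {e f : E} (h : A.add e f = some A.zero) :
    f = A.zero := by
  have h1 := A.assoc e f A.one
  rw [h, Option.bind_some] at h1
  rw [show A.add A.zero A.one = some A.one from A.zero_add A.one] at h1
  obtain ⟨d, hd, _⟩ := Option.bind_eq_some_iff.mp h1.symm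
  exact A.one_max f d hd

lemma eq_zero_left (A : EffectAlgebra E) {e f : E} (h : A.add e f = some A.zero) :
    e = A.zero :=
  A.eq_zero_right (by rwa [A.comm])

lemma le_refl (A : EffectAlgebra E) (e : E) : A.le e e := ⟨A.zero, A.add_zero e⟩

lemma le_one (A : EffectAlgebra E) (e : E) : A.le e A.one := ⟨A.compl e, A.add_compl e⟩

lemma le_trans (A : EffectAlgebra E) {e f g : E} (h1 : A.le e f) (h2 : A.le f g) :
    A.le e g := by
  obtain ⟨x, hx⟩ := h1; obtain ⟨y, hy⟩ := h2
  have h := A.assoc e x y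
  rw [hx, Option.bind_some, hy] at h
  obtain ⟨s, hs, hes⟩ := Option.bind_eq_some_iff.mp h.symm
  exact ⟨s, hes⟩

lemma le_cancel (A : EffectAlgebra E) {a g e t u : E} (h1 : A.add a g = some e)
    (h2 : A.add a t = some u) (h3 : A.le e u) : A.le g t := by
  obtain ⟨s, hs⟩ := h3
  have h := A.assoc a g s
  rw [h1, Option.bind_some, hs] at h
  obtain ⟨d, hd, had⟩ := Option.bind_eq_some_iff.mp h.symm
  have hdt : d = t := A.cancel had h2
  exact ⟨s, by rw [hd, hdt]⟩

lemma nsum_succ (A : EffectAlgebra E) (a : E) (k : ℕ) :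
    A.nsum a (k+1) = (A.nsum a k).bind (fun s => A.add a s) := rfl

lemma nsum_zero (A : EffectAlgebra E) (a : E) : A.nsum a 0 = some A.zero := rfl

lemma nsum_defined_of_le (A : EffectAlgebra E) (a : E) {j k : ℕ} (hjk : j ≤ k) {x : E}
    (hx : A.nsum a k = some x) : ∃ y, A.nsum a j = some y := by
  obtain ⟨d, rfl⟩ := Nat.exists_eq_add_of_le hjk
  clear hjk
  induction d generalizing x with
  | zero => exact ⟨x, hx⟩
  | succ d ih =>
    rw [show j + (d+1) = (j+d)+1 from rfl, A.nsum_succ] at hx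
    obtain ⟨y, hy, _⟩ := Option.bind_eq_some_iff.mp hx
    exact ih hy

lemma nsum_add (A : EffectAlgebra E) (a : E) :
    ∀ j k : ℕ, ∀ x y z : E, A.nsum a j = some x → A.nsum a k = some y →
      A.add x y = some z → A.nsum a (j + k) = some z := by
  intro j
  induction j with
  | zero =>
    intro k x y z hx hy hxy
    have hx0 : A.zero = x := Option.some.inj hx
    rw [← hx0, A.zero_add] at hxy
    have hyz : y = z := Option.some.inj hxy
    rw [Nat.zero_add, hy, hyz]
  | succ j ih =>
    intro k x y z hx hy hxy
    rw [A.nsum_succ] at hx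
    obtain ⟨x', hx', hax⟩ := Option.bind_eq_some_iff.mp hx
    have h := A.assoc a x' y
    rw [hax, Option.bind_some, hxy] at h
    obtain ⟨w, hw, haw⟩ := Option.bind_eq_some_iff.mp h.symm
    have hjk := ih k x' y w hx' hy hw
    rw [show j+1+k = (j+k)+1 from by omega, A.nsum_succ, hjk, Option.bind_some]
    exact haw

lemma nsum_split (A : EffectAlgebra E) (a : E) :
    ∀ j k : ℕ, ∀ z : E, A.nsum a (j+k) = some z →
      ∃ x y, A.nsum a j = some x ∧ A.nsum a k = some y ∧ A.add x y = some z := by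
  intro j
  induction j with
  | zero =>
    intro k z hz
    rw [Nat.zero_add] at hz
    exact ⟨A.zero, z, rfl, hz, A.zero_add z⟩
  | succ j ih =>
    intro k z hz
    rw [show j+1+k = (j+k)+1 from by omega, A.nsum_succ] at hz
    obtain ⟨w, hw, haw⟩ := Option.bind_eq_some_iff.mp hz
    obtain ⟨x, y, hx, hy, hxy⟩ := ih k w hw
    have h := A.assoc a x y
    rw [hxy, Option.bind_some, haw] at h
    obtain ⟨x'', hx'', h2⟩ := Option.bind_eq_some_iff.mp h
    refine ⟨x'', y, ?_, hy, h2⟩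
    rw [A.nsum_succ, hx, Option.bind_some]
    exact hx''

lemma nsum_inj (A : EffectAlgebra E) {a : E} (ha : a ≠ A.zero) {j k : ℕ} {x : E}
    (hj : A.nsum a j = some x) (hk : A.nsum a k = some x) : j = k := by
  suffices H : ∀ j k : ℕ, ∀ x : E, j ≤ k → A.nsum a j = some x → A.nsum a k = some x → j = k by
    rcases le_total j k with h | h
    · exact H j k x h hj hk
    · exact (H k j x h hk hj).symm
  clear hj hk
  intro j k x hjk hj hk
  obtain ⟨d, rfl⟩ := Nat.exists_eq_add_of_le hjk
  obtain ⟨x1, y, hx1, hy, hxy⟩ := A.nsum_split a j d x hk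
  have hx1x : x1 = x := by rw [hj] at hx1; exact (Option.some.inj hx1).symm
  rw [hx1x] at hxy
  have hy0 : y = A.zero := A.cancel hxy (A.add_zero x)
  rcases Nat.eq_zero_or_pos d with hd | hd
  · omega
  · obtain ⟨d', rfl⟩ : ∃ d', d = d'+1 := ⟨d-1, by omega⟩
    rw [A.nsum_succ] at hy
    obtain ⟨t, ht, hat⟩ := Option.bind_eq_some_iff.mp hy
    rw [hy0] at hat
    exact absurd (A.eq_zero_left hat) ha

lemma add_defined (A : EffectAlgebra E) {a x : E}
    (hmin : ∀ e, e ≠ A.zero → A.le a e) (hx : x ≠ A.one) : ∃ y, A.add a x = some y := by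
  have hcx : A.compl x ≠ A.zero := by
    intro h
    apply hx
    calc x = A.compl (A.compl x) := (A.compl_compl x).symm
      _ = A.compl A.zero := by rw [h]
      _ = A.one := A.compl_zero
  obtain ⟨g, hg⟩ := hmin _ hcx
  have h := A.assoc x a g
  rw [hg, Option.bind_some, A.add_compl] at h
  obtain ⟨u, hu, _⟩ := Option.bind_eq_some_iff.mp h
  exact ⟨u, by rw [A.comm]; exact hu⟩

lemma exists_min (A : EffectAlgebra E) (htot : ∀ a b : E, A.le a b ∨ A.le b a) :
    ∀ s : Finset E, s.Nonempty → ∃ a ∈ s, ∀ b ∈ s, A.le a b := by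
  classical
  intro s
  induction s using Finset.induction_on with
  | empty => intro h; exact absurd h Finset.not_nonempty_empty
  | @insert x s hx ih =>
    intro _
    rcases s.eq_empty_or_nonempty with rfl | hs
    · refine ⟨x, Finset.mem_insert_self x _, ?_⟩
      intro b hb
      rcases Finset.mem_insert.mp hb with rfl | hb
      · exact A.le_refl _
      · exact absurd hb (Finset.notMem_empty b)
    · obtain ⟨a, has, hmin⟩ := ih hs
      rcases htot a x with h | h
      · refine ⟨a, Finset.mem_insert_of_mem has, ?_⟩
        intro b hb
        rcases Finset.mem_insert.mp hb with rfl | hb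
        · exact h
        · exact hmin b hb
      · refine ⟨x, Finset.mem_insert_self x _, ?_⟩
        intro b hb
        rcases Finset.mem_insert.mp hb with rfl | hb
        · exact A.le_refl _
        · exact A.le_trans h (hmin b hb)

end EffectAlgebra

theorem totallyOrdered_iso_scale {E : Type*} [Fintype E] (A : EffectAlgebra E)
    (n : ℕ) (hn : 2 ≤ n) (hcard : Fintype.card E = n)
    (htot : ∀ a b : E, A.le a b ∨ A.le b a) :
    ∃ Θ : E → ℝ,
      (∀ e, Θ e ∈ scaleSet n) ∧
      Function.Injective Θ ∧
      (∀ x ∈ scaleSet n, ∃ e, Θ e = x) ∧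
      Θ A.one = 1 ∧
      (∀ e f, (∃ g, A.add e f = some g) ↔ Θ e + Θ f ≤ 1) ∧
      (∀ e f g, A.add e f = some g → Θ g = Θ e + Θ f) := by
  classical
  have hcard1 : 1 < Fintype.card E := by omega
  obtain ⟨b0, hb0⟩ := Fintype.exists_ne_of_one_lt_card hcard1 A.zero
  obtain ⟨a, has, hminset⟩ := A.exists_min htot (Finset.univ.filter (fun e => e ≠ A.zero))
    ⟨b0, by simp [hb0]⟩
  have ha : a ≠ A.zero := by simpa using has
  have hmin : ∀ e, e ≠ A.zero → A.le a e := fun e he => hminset e (by simp [he])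
  -- existence of m with (m+1)·a reaching 1
  have hm : ∃ m, A.nsum a m = some A.one := by
    by_contra hno
    push_neg at hno
    have hall : ∀ k, ∃ x, A.nsum a k = some x := by
      intro k
      induction k with
      | zero => exact ⟨A.zero, rfl⟩
      | succ k ih =>
        obtain ⟨x, hx⟩ := ih
        have hx1 : x ≠ A.one := fun h => hno k (by rw [← h]; exact hx)
        obtain ⟨y, hy⟩ := A.add_defined hmin hx1
        exact ⟨y, by rw [A.nsum_succ, hx, Option.bind_some]; exact hy⟩
    have hinj : Function.Injective (fun k => (hall k).choose) := by
      intro j k h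
      have h' : (hall j).choose = (hall k).choose := h
      apply A.nsum_inj ha (hall j).choose_spec
      rw [h']
      exact (hall k).choose_spec
    obtain ⟨j, k, hne, heq⟩ := Finite.exists_ne_map_eq_of_infinite (fun k => (hall k).choose)
    exact hne (hinj heq)
  obtain ⟨m, hm1⟩ := hm
  have hdef : ∀ k, k ≤ m → ∃ x, A.nsum a k = some x := fun k hk =>
    A.nsum_defined_of_le a hk hm1
  have hbound : ∀ k x, A.nsum a k = some x → k ≤ m := by
    intro k x hx
    by_contra hk
    push_neg at hk
    obtain ⟨y, hy⟩ := A.nsum_defined_of_le a (Nat.succ_le_of_lt hk) hx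
    rw [A.nsum_succ, hm1, Option.bind_some] at hy
    exact ha (A.one_max a y hy)
  have hsurj : ∀ e : E, ∃ k, A.nsum a k = some e := by
    have key : ∀ k x e, A.nsum a k = some x → A.le e x → ∃ j, A.nsum a j = some e := by
      intro k
      induction k with
      | zero =>
        intro x e hx hle
        have hx0 : A.zero = x := Option.some.inj hx
        obtain ⟨g, hg⟩ := hle
        rw [← hx0] at hg
        refine ⟨0, ?_⟩
        rw [A.eq_zero_left hg]
        rfl
      | succ k ih =>
        intro x e hx hle
        rw [A.nsum_succ] at hx
        obtain ⟨t, ht, hat⟩ := Option.bind_eq_some_iff.mp hx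
        by_cases he : e = A.zero
        · exact ⟨0, by rw [he]; rfl⟩
        · obtain ⟨g, hg⟩ := hmin e he
          have hgt : A.le g t := A.le_cancel hg hat hle
          obtain ⟨j, hj⟩ := ih t g ht hgt
          exact ⟨j+1, by rw [A.nsum_succ, hj, Option.bind_some]; exact hg⟩
    exact fun e => key m A.one e hm1 (A.le_one e)
  choose kf hkf using hsurj
  have hkfle : ∀ e, kf e ≤ m := fun e => hbound _ _ (hkf e)
  choose bf hbf using hdef
  have hneq : n = m + 1 := by
    have hb : Function.Bijective (fun i : Fin (m+1) => bf i.1 (Nat.lt_succ_iff.mp i.isLt)) := by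
      constructor
      · intro i j hij
        have hij' : bf i.1 (Nat.lt_succ_iff.mp i.isLt) = bf j.1 (Nat.lt_succ_iff.mp j.isLt) := hij
        have h1 := hbf i.1 (Nat.lt_succ_iff.mp i.isLt)
        have h2 := hbf j.1 (Nat.lt_succ_iff.mp j.isLt)
        rw [← hij'] at h2
        exact Fin.ext (A.nsum_inj ha h1 h2)
      · intro e
        refine ⟨⟨kf e, Nat.lt_succ_of_le (hkfle e)⟩, ?_⟩
        have h1 := hbf (kf e) (hkfle e)
        have h2 := hkf e
        rw [h1] at h2
        exact Option.some.inj h2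
    have := Fintype.card_of_bijective hb
    rw [Fintype.card_fin] at this
    omega
  have hkuniq : ∀ e k, A.nsum a k = some e → kf e = k := fun e k h =>
    A.nsum_inj ha (hkf e) h
  have hc : ((n:ℝ) - 1) = (m:ℝ) := by rw [hneq]; push_cast; ring
  have hcpos : (0:ℝ) < (n:ℝ) - 1 := by
    rw [hc]
    exact_mod_cast Nat.pos_of_ne_zero (by omega)
  refine ⟨fun e => (kf e : ℝ) / ((n:ℝ) - 1), ?_, ?_, ?_, ?_, ?_, ?_⟩
  · intro e
    exact ⟨kf e, by have := hkfle e; omega, rfl⟩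
  · intro e f h
    have hcne : ((n:ℝ) - 1) ≠ 0 := ne_of_gt hcpos
    simp only at h
    field_simp at h
    have h3 : kf e = kf f := by exact_mod_cast h
    have h4 := hkf f
    rw [← h3, hkf e] at h4
    exact Option.some.inj h4
  · intro x hx
    obtain ⟨j, hj, rfl⟩ := hx
    have hjm : j ≤ m := by omega
    have hy := hbf j hjm
    refine ⟨bf j hjm, ?_⟩
    show ((kf (bf j hjm) : ℝ)) / ((n:ℝ) - 1) = (j : ℝ) / ((n:ℝ) - 1)
    rw [hkuniq _ j hy]
  · have hk1 : kf A.one = m := hkuniq _ _ hm1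
    show ((kf A.one : ℝ)) / ((n:ℝ) - 1) = 1
    rw [hk1, hc]
    exact div_self (Nat.cast_ne_zero.mpr (by omega))
  · intro e f
    show (∃ g, A.add e f = some g) ↔ (kf e : ℝ) / ((n:ℝ) - 1) + (kf f : ℝ) / ((n:ℝ) - 1) ≤ 1
    constructor
    · rintro ⟨g, hg⟩
      have hsum := A.nsum_add a (kf e) (kf f) e f g (hkf e) (hkf f) hg
      have hle : kf e + kf f ≤ m := hbound _ _ hsum
      rw [← add_div, div_le_one hcpos, hc]
      exact_mod_cast hle
    · intro h
      rw [← add_div, div_le_one hcpos, hc] at h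
      have hle : kf e + kf f ≤ m := by exact_mod_cast h
      obtain ⟨z, hz⟩ := A.nsum_defined_of_le a hle hm1
      obtain ⟨x, y, hx, hy, hxy⟩ := A.nsum_split a (kf e) (kf f) z hz
      rw [hkf e] at hx
      rw [hkf f] at hy
      have hxe : x = e := (Option.some.inj hx).symm
      have hyf : y = f := (Option.some.inj hy).symm
      exact ⟨z, by rw [← hxe, ← hyf]; exact hxy⟩
  · intro e f g hg
    have hsum := A.nsum_add a (kf e) (kf f) e f g (hkf e) (hkf f) hg
    have hkg : kf g = kf e + kf f := hkuniq _ _ hsum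
    show ((kf g : ℝ)) / ((n:ℝ) - 1) = (kf e : ℝ) / ((n:ℝ) - 1) + (kf f : ℝ) / ((n:ℝ) - 1)
    rw [hkg, ← add_div]
    push_cast
    ring
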